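/- For every pair of configurations σ, σ' with maj_r(σ) = σ', the number of maximal homogeneous blocks of σ' is at most the number of maximal homogeneous blocks of σ. -/

import Mathlib

open Finset

/-- Number of `true` cells in the radius-`r` neighborhood `[i-r, i+r]` of cell `i`. -/
def majCount (n r : ℕ) (σ : ZMod n → Bool) (i : ZMod n) : ℕ :=
  ((Finset.range (2 * r + 1)).filter (fun (t : ℕ) => σ (i - (r : ZMod n) + (t : ZMod n)) = true)).card

/-- The majority rule with radius `r`. -/
def maj (n r : ℕ) (σ : ZMod n → Bool) : ZMod n → Bool :=
  fun i => decide (r + 1 ≤ majCount n r σ i)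

/-- Number of cells with state `β` in the cyclic interval starting at `a` of length `L`. -/
def cnt (n : ℕ) (σ : ZMod n → Bool) (a : ZMod n) (L : ℕ) (β : Bool) : ℕ :=
  ((Finset.range L).filter (fun (t : ℕ) => σ (a + (t : ZMod n)) = β)).card

/-- `[a, a+L-1]` is a maximal homogeneous block of `σ`. -/
def IsBlock (n : ℕ) (σ : ZMod n → Bool) (a : ZMod n) (L : ℕ) : Prop :=
  0 < L ∧ L ≤ n ∧ (∀ t : ℕ, t < L → σ (a + (t : ZMod n)) = σ a) ∧
    σ (a - 1) ≠ σ a ∧ σ (a + (L : ZMod n)) ≠ σ a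

/-- Cell `c` lies in the cyclic interval starting at `a` of length `L`. -/
def InBlock (n : ℕ) (c a : ZMod n) (L : ℕ) : Prop :=
  ∃ t : ℕ, t < L ∧ c = a + (t : ZMod n)

lemma majCount_succ (n r : ℕ) (σ : ZMod n → Bool) (i : ZMod n) :
    majCount n r σ (i + 1) + (if σ (i - (r : ZMod n)) then 1 else 0)
      = majCount n r σ i + (if σ (i + (r : ZMod n) + 1) then 1 else 0) := by
  classical
  set f : ℕ → ℕ := fun s => if σ (i - (r : ZMod n) + (s : ZMod n)) then 1 else 0 with hf
  have h1 : majCount n r σ i = ∑ s ∈ Finset.range (2*r+1), f s := by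
    rw [majCount, Finset.card_filter]
  have h2 : majCount n r σ (i + 1) = ∑ s ∈ Finset.range (2*r+1), f (s + 1) := by
    rw [majCount, Finset.card_filter]
    apply Finset.sum_congr rfl
    intro t _
    have : i + 1 - (r : ZMod n) + (t : ZMod n) = i - (r : ZMod n) + ((t + 1 : ℕ) : ZMod n) := by
      push_cast; ring
    simp [hf, this]
  have h3 : ∑ s ∈ Finset.range (2*r+2), f s = ∑ s ∈ Finset.range (2*r+1), f s + f (2*r+1) :=
    Finset.sum_range_succ f (2*r+1)
  have h4 : ∑ s ∈ Finset.range (2*r+2), f s = ∑ s ∈ Finset.range (2*r+1), f (s+1) + f 0 :=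
    Finset.sum_range_succ' f (2*r+1)
  have hf0 : f 0 = if σ (i - (r : ZMod n)) then 1 else 0 := by simp [hf]
  have hftop : f (2*r+1) = if σ (i + (r : ZMod n) + 1) then 1 else 0 := by
    have : i - (r : ZMod n) + ((2*r+1 : ℕ) : ZMod n) = i + (r : ZMod n) + 1 := by
      push_cast; ring
    simp only [hf]
    rw [this]
  omega

lemma switch_ends (n r : ℕ) (σ : ZMod n → Bool) (i : ZMod n)
    (h : maj n r σ i ≠ maj n r σ (i + 1)) :
    σ (i - (r : ZMod n)) = maj n r σ i ∧ σ (i + (r : ZMod n) + 1) = maj n r σ (i + 1) := by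
  have key := majCount_succ n r σ i
  by_cases hp : r + 1 ≤ majCount n r σ i <;> by_cases hq : r + 1 ≤ majCount n r σ (i+1) <;>
    simp [maj, hp, hq] at h ⊢ <;>
    rcases Bool.eq_false_or_eq_true (σ (i - (r:ZMod n))) with ha | ha <;>
    rcases Bool.eq_false_or_eq_true (σ (i + (r:ZMod n) + 1)) with hb | hb <;>
    simp [ha, hb] at key ⊢ <;> omega

lemma exists_switch (n : ℕ) (σ : ZMod n → Bool) (a : ZMod n) :
    ∀ m : ℕ, σ a ≠ σ (a + (m : ZMod n)) →
      ∃ t, t < m ∧ σ (a + (t : ZMod n)) ≠ σ (a + (t : ZMod n) + 1) := by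
  intro m
  induction m with
  | zero => intro h; simp at h
  | succ m ih =>
    intro h
    by_cases hc : σ (a + (m : ZMod n)) = σ (a + (m : ZMod n) + 1)
    · have hm : σ a ≠ σ (a + (m : ZMod n)) := by
        intro he
        apply h
        rw [he, hc]
        congr 1
        push_cast; ring
      obtain ⟨t, ht, hs⟩ := ih hm
      exact ⟨t, by omega, hs⟩
    · exact ⟨m, by omega, hc⟩

lemma const_before (n : ℕ) (σ : ZMod n → Bool) (a : ZMod n) (N : ℕ)
    (hN : ∀ t < N, σ (a + (t : ZMod n)) = σ (a + (t : ZMod n) + 1)) :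
    ∀ s ≤ N, σ (a + (s : ZMod n)) = σ a := by
  intro s
  induction s with
  | zero => intro _; simp
  | succ s ih =>
    intro hs
    have h1 := hN s (by omega)
    have h2 := ih (by omega)
    have : a + ((s + 1 : ℕ) : ZMod n) = a + (s : ZMod n) + 1 := by push_cast; ring
    rw [this, ← h1, h2]

lemma inj_aux (n r : ℕ) [NeZero n] (σ : ZMod n → Bool) (i i' : ZMod n)
    (hi : maj n r σ i ≠ maj n r σ (i + 1)) (hi' : maj n r σ i' ≠ maj n r σ (i' + 1))
    (t t' : ℕ) (ht' : t' ≤ t)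
    (heq : i - (r : ZMod n) + (t : ZMod n) = i' - (r : ZMod n) + (t' : ZMod n))
    (hconst : ∀ s ≤ t, σ (i - (r : ZMod n) + (s : ZMod n)) = σ (i - (r : ZMod n))) :
    i = i' := by
  have hd : i' = i + ((t - t' : ℕ) : ZMod n) := by
    have hc : ((t - t' : ℕ) : ZMod n) = (t : ZMod n) - (t' : ZMod n) := by
      push_cast [Nat.cast_sub ht']; ring
    rw [hc]
    linear_combination -heq
  set d := t - t' with hdd
  rcases Nat.eq_zero_or_pos d with h0 | hpos
  · rw [hd, h0]; simp
  · exfalso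
    -- σ (i - r) = maj i , σ (i' - r) = maj i'
    have e1 := (switch_ends n r σ i hi).1
    have e1' := (switch_ends n r σ i' hi').1
    -- claim : maj (i + (e+1)) = ! maj i for e+1 ≤ d
    have claim : ∀ e : ℕ, e + 1 ≤ d → maj n r σ (i + ((e + 1 : ℕ) : ZMod n)) = ! maj n r σ i := by
      intro e
      induction e with
      | zero =>
        intro _
        have : i + ((1 : ℕ) : ZMod n) = i + 1 := by push_cast; ring
        rw [this]
        revert hi; cases maj n r σ i <;> cases maj n r σ (i + 1) <;> simp
      | succ e ih =>
        intro he
        have ihv := ih (by omega)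
        set j := i + ((e + 1 : ℕ) : ZMod n) with hj
        by_cases hs : maj n r σ j = maj n r σ (j + 1)
        · have : i + ((e + 1 + 1 : ℕ) : ZMod n) = j + 1 := by rw [hj]; push_cast; ring
          rw [this, ← hs, ihv]
        · have e2 := (switch_ends n r σ j hs).1
          have hjr : j - (r : ZMod n) = i - (r : ZMod n) + ((e + 1 : ℕ) : ZMod n) := by
            rw [hj]; ring
          have := hconst (e + 1) (by omega)
          rw [← hjr] at this
          rw [e2, ihv] at this
          rw [e1] at this
          cases maj n r σ i <;> simp at this
    have hmaj' : maj n r σ i' = ! maj n r σ i := by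
      have := claim (d - 1) (by omega)
      have hcast : i + ((d - 1 + 1 : ℕ) : ZMod n) = i + ((d : ℕ) : ZMod n) := by
        congr 2; omega
      rw [hcast, ← hd] at this
      exact this
    have hsame : maj n r σ i' = maj n r σ i := by
      have hir : i' - (r : ZMod n) = i - (r : ZMod n) + ((d : ℕ) : ZMod n) := by
        rw [hd]; ring
      have := hconst d (by omega)
      rw [← hir, e1', e1] at this
      exact this
    rw [hsame] at hmaj'
    cases maj n r σ i <;> simp at hmaj'

/-- Applying `maj_r` cannot increase the number of maximal homogeneous blocks
(equivalently, the number of switch points). -/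
theorem number_of_blocks_nonincreasing (n r : ℕ) [NeZero n] (hr : 1 ≤ r)
    (σ σ' : ZMod n → Bool) (h : maj n r σ = σ') :
    (Finset.univ.filter (fun i : ZMod n => σ' i ≠ σ' (i + 1))).card ≤
      (Finset.univ.filter (fun i : ZMod n => σ i ≠ σ (i + 1))).card := by
  classical
  subst h
  set Q : ZMod n → ℕ → Prop := fun i t =>
    σ (i - (r : ZMod n) + (t : ZMod n)) ≠ σ (i - (r : ZMod n) + (t : ZMod n) + 1) with hQ
  have hex : ∀ i : ZMod n, maj n r σ i ≠ maj n r σ (i + 1) → ∃ t, Q i t := by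
    intro i hi
    have e1 := (switch_ends n r σ i hi).1
    have e2 := (switch_ends n r σ i hi).2
    have hne : σ (i - (r : ZMod n)) ≠ σ (i - (r : ZMod n) + ((2*r+1 : ℕ) : ZMod n)) := by
      have hc : i - (r : ZMod n) + ((2*r+1 : ℕ) : ZMod n) = i + (r : ZMod n) + 1 := by
        push_cast; ring
      rw [hc, e1, e2]
      exact hi
    obtain ⟨t, _, hs⟩ := exists_switch n σ (i - (r : ZMod n)) (2*r+1) hne
    exact ⟨t, hs⟩
  set F : ZMod n → ZMod n := fun i =>
    if h : ∃ t, Q i t then i - (r : ZMod n) + ((Nat.find h : ℕ) : ZMod n) else 0 with hF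
  apply Finset.card_le_card_of_injOn F
  · intro i hi
    rw [Finset.mem_coe, Finset.mem_filter] at hi ⊢
    obtain ⟨_, hi⟩ := hi
    refine ⟨Finset.mem_univ _, ?_⟩
    have hEx := hex i hi
    have hspec := Nat.find_spec hEx
    rw [hF]
    simp only [dif_pos hEx]
    exact hspec
  · intro i hi i' hi' hFe
    rw [Finset.coe_filter] at hi hi'
    simp only [Set.mem_setOf_eq] at hi hi'
    obtain ⟨_, hi⟩ := hi
    obtain ⟨_, hi'⟩ := hi'
    have hEx := hex i hi
    have hEx' := hex i' hi'
    rw [hF] at hFe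
    simp only [dif_pos hEx, dif_pos hEx'] at hFe
    have hconst : ∀ (a : ZMod n) (hE : ∃ t, Q a t),
        ∀ s ≤ Nat.find hE, σ (a - (r : ZMod n) + (s : ZMod n)) = σ (a - (r : ZMod n)) := by
      intro a hE
      apply const_before
      intro u hu
      have := Nat.find_min hE hu
      rw [hQ] at this
      simpa using this
    rcases le_total (Nat.find hEx') (Nat.find hEx) with hle | hle
    · exact inj_aux n r σ i i' hi hi' _ _ hle hFe (hconst i hEx)
    · exact (inj_aux n r σ i' i hi' hi _ _ hle hFe.symm (hconst i' hEx')).symm
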